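/- (Synchronous convergence.) Let d ≥ 1 and let M ∈ ℝ^{d×d} be symmetric positive definite with M_{hh} ≥ M_{hk} ≥ 0 for all h, k, and set D = max_h M_{hh}. Let θ ∈ ℝ with sin θ ≠ 0, U_N > 0, b ∈ ℝ, and c, r ∈ ℝ^d fixed vectors, and let γ satisfy 0 < γ < U_N² / (sin²θ · d · D). Define v̂(q) = c + (2 sin θ / U_N²) M q and the synchronous iteration λ(t+1) = [λ(t) + γ(b𝟙 − v̂(q(t)))]₊, q(t+1) = sin θ · λ(t+1) − r. If (q*, λ*) is a fixed point of this iteration, then for every initial condition (q(0), λ(0)) with λ(0) ≥ 0 the sequence (q(t), λ(t)) converges to (q*, λ*) as t → ∞. -/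

import Mathlib

open Matrix

open Matrix Finset Filter

lemma quad_upper {d : ℕ} (M : Matrix (Fin d) (Fin d) ℝ) (D : ℝ) (hD0 : 0 ≤ D)
    (hM : ∀ h k, 0 ≤ M h k ∧ M h k ≤ D) (x : Fin d → ℝ) :
    x ⬝ᵥ (M *ᵥ x) ≤ (d * D) * (x ⬝ᵥ x) := by
  have h1 : x ⬝ᵥ (M *ᵥ x) = ∑ h, ∑ k, M h k * (x h * x k) := by
    simp only [dotProduct, Matrix.mulVec, Finset.mul_sum]
    exact Finset.sum_congr rfl fun h _ => Finset.sum_congr rfl fun k _ => by ring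
  have h2 : ∀ h k : Fin d, M h k * (x h * x k) ≤ D * (|x h| * |x k|) := by
    intro h k
    calc M h k * (x h * x k) ≤ M h k * |x h * x k| :=
          mul_le_mul_of_nonneg_left (le_abs_self _) (hM h k).1
      _ ≤ D * |x h * x k| := mul_le_mul_of_nonneg_right (hM h k).2 (abs_nonneg _)
      _ = D * (|x h| * |x k|) := by rw [abs_mul]
  have h3 : x ⬝ᵥ (M *ᵥ x) ≤ D * ((∑ h, |x h|) * (∑ k, |x k|)) := by
    rw [h1, Finset.sum_mul_sum, Finset.mul_sum]
    refine Finset.sum_le_sum fun h _ => ?_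
    rw [Finset.mul_sum]
    exact Finset.sum_le_sum fun k _ => h2 h k
  have h4 : (∑ h, |x h|) * (∑ k, |x k|) ≤ d * ∑ h, |x h| ^ 2 := by
    rw [← sq]
    simpa using sq_sum_le_card_mul_sum_sq (s := Finset.univ) (f := fun h => |x h|)
  have h5 : x ⬝ᵥ x = ∑ h, |x h| ^ 2 := by
    simp [dotProduct, sq_abs, sq]
  calc x ⬝ᵥ (M *ᵥ x) ≤ D * ((∑ h, |x h|) * (∑ k, |x k|)) := h3
    _ ≤ D * (d * ∑ h, |x h| ^ 2) := mul_le_mul_of_nonneg_left h4 hD0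
    _ = (d * D) * (x ⬝ᵥ x) := by rw [h5]; ring

open scoped MatrixOrder in
lemma quad_sq_le {d : ℕ} {A : Matrix (Fin d) (Fin d) ℝ} (hA : A.PosSemidef) {β : ℝ}
    (hβ : ∀ x : Fin d → ℝ, x ⬝ᵥ (A *ᵥ x) ≤ β * (x ⬝ᵥ x)) (x : Fin d → ℝ) :
    (A *ᵥ x) ⬝ᵥ (A *ᵥ x) ≤ β * (x ⬝ᵥ (A *ᵥ x)) := by
  set S := CFC.sqrt A with hSdef
  have hS : S.PosSemidef := (CFC.sqrt_nonneg A).posSemidef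
  have hSS : S * S = A := CFC.sqrt_mul_sqrt_self A hA.nonneg
  have hsymm : Sᵀ = S := by
    rw [← Matrix.conjTranspose_eq_transpose_of_trivial]
    exact hS.isHermitian
  have key : ∀ y : Fin d → ℝ, (S *ᵥ y) ⬝ᵥ (S *ᵥ y) = y ⬝ᵥ (A *ᵥ y) := by
    intro y
    rw [Matrix.dotProduct_mulVec]
    have hAsymm : Aᵀ = A := by
      rw [← Matrix.conjTranspose_eq_transpose_of_trivial]; exact hA.isHermitian
    have : (S *ᵥ y) ᵥ* S = A *ᵥ y := by
      rw [Matrix.vecMul_mulVec, hsymm, hSS]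
      conv_lhs => rw [← hAsymm, Matrix.vecMul_transpose]
    rw [this, dotProduct_comm]
  have hAx : A *ᵥ x = S *ᵥ (S *ᵥ x) := by rw [Matrix.mulVec_mulVec, hSS]
  calc (A *ᵥ x) ⬝ᵥ (A *ᵥ x) = (S *ᵥ x) ⬝ᵥ (A *ᵥ (S *ᵥ x)) := by
        rw [hAx, key]
    _ ≤ β * ((S *ᵥ x) ⬝ᵥ (S *ᵥ x)) := hβ _
    _ = β * (x ⬝ᵥ (A *ᵥ x)) := by rw [key]


lemma quad_lower {d : ℕ} (hd : 1 ≤ d) (M : Matrix (Fin d) (Fin d) ℝ) (hpd : M.PosDef) :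
    ∃ m > 0, ∀ x : Fin d → ℝ, m * (x ⬝ᵥ x) ≤ x ⬝ᵥ (M *ᵥ x) := by
  have hcont : Continuous fun x : Fin d → ℝ => x ⬝ᵥ (M *ᵥ x) := by
    simp only [dotProduct, Matrix.mulVec]
    fun_prop
  have hcont2 : Continuous fun x : Fin d → ℝ => x ⬝ᵥ x := by
    simp only [dotProduct]
    fun_prop
  set Sp : Set (Fin d → ℝ) := {x | x ⬝ᵥ x = 1} with hSp
  have hclosed : IsClosed Sp := isClosed_eq hcont2 continuous_const
  have hsub : Sp ⊆ Metric.closedBall 0 1 := by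
    intro x hx
    simp only [Metric.mem_closedBall, dist_zero_right]
    rw [pi_norm_le_iff_of_nonneg zero_le_one]
    intro h
    rw [Real.norm_eq_abs, abs_le_one_iff_mul_self_le_one]
    calc x h * x h ≤ ∑ k, x k * x k :=
          Finset.single_le_sum (fun k _ => mul_self_nonneg (x k)) (Finset.mem_univ h)
      _ = 1 := hx
  have hcomp : IsCompact Sp :=
    (isCompact_closedBall (0:(Fin d → ℝ)) 1).of_isClosed_subset hclosed hsub
  have hne : Sp.Nonempty := by
    refine ⟨Pi.single ⟨0, hd⟩ 1, ?_⟩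
    simp [hSp, dotProduct, Pi.single_apply]
  obtain ⟨x₀, hx₀, hmin⟩ := hcomp.exists_isMinOn hne hcont.continuousOn
  rw [isMinOn_iff] at hmin
  refine ⟨x₀ ⬝ᵥ (M *ᵥ x₀), ?_, ?_⟩
  · refine lt_of_lt_of_eq (hpd.dotProduct_mulVec_pos (x := x₀) ?_) (by simp)
    intro h0
    rw [h0] at hx₀
    simp [hSp, dotProduct] at hx₀
  · intro x
    rcases eq_or_ne x 0 with rfl | hx
    · simp
    · have hxx : 0 < x ⬝ᵥ x := by
        have h1 : x ⬝ᵥ x = ∑ h, x h ^ 2 := by simp [dotProduct, sq]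
        rw [h1]
        apply Finset.sum_pos'
        · intro i _; positivity
        · obtain ⟨i, hi⟩ := Function.ne_iff.mp hx
          exact ⟨i, Finset.mem_univ i, lt_of_le_of_ne (sq_nonneg _) (Ne.symm (pow_ne_zero 2 hi))⟩
      set t : ℝ := Real.sqrt (x ⬝ᵥ x) with ht
      have ht0 : 0 < t := Real.sqrt_pos.mpr hxx
      have ht2 : t ^ 2 = x ⬝ᵥ x := Real.sq_sqrt hxx.le
      have hy : (t⁻¹ • x) ∈ Sp := by
        simp only [hSp, Set.mem_setOf_eq, smul_dotProduct, dotProduct_smul,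
          smul_eq_mul]
        field_simp
        rw [← ht2]
      have := hmin _ hy
      have hval : (t⁻¹ • x) ⬝ᵥ (M *ᵥ (t⁻¹ • x)) = t⁻¹ * t⁻¹ * (x ⬝ᵥ (M *ᵥ x)) := by
        rw [Matrix.mulVec_smul, smul_dotProduct, dotProduct_smul]
        simp [mul_assoc]
      rw [hval] at this
      have h2 : (x₀ ⬝ᵥ (M *ᵥ x₀)) * (x ⬝ᵥ x) ≤ x ⬝ᵥ (M *ᵥ x) := by
        have := mul_le_mul_of_nonneg_right this (le_of_lt (by positivity : (0:ℝ) < t ^ 2))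
        calc (x₀ ⬝ᵥ (M *ᵥ x₀)) * (x ⬝ᵥ x) = (x₀ ⬝ᵥ (M *ᵥ x₀)) * t ^ 2 := by rw [ht2]
          _ ≤ t⁻¹ * t⁻¹ * (x ⬝ᵥ (M *ᵥ x)) * t ^ 2 := this
          _ = (x ⬝ᵥ (M *ᵥ x)) * (t⁻¹ * t) ^ 2 := by ring
          _ = x ⬝ᵥ (M *ᵥ x) := by rw [inv_mul_cancel₀ ht0.ne']; ring
      linarith



/-- **Synchronous convergence.** Let `M` be symmetric positive definite
with `M_{hh} ≥ M_{hk} ≥ 0`, `D = max_h M_{hh}`, `sin θ ≠ 0`, `U_N > 0`, and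
`0 < γ < U_N² / (sin²θ · d · D)`. Consider the synchronous dual-ascent iteration
`λ(t+1) = [λ(t) + γ(b𝟙 − v̂(q(t)))]₊`, `q(t+1) = sin θ · λ(t+1) − r`, where
`v̂(q) = c + (2 sin θ / U_N²) M q`. If `(q*, λ*)` is a fixed point of the iteration,
then from any initial condition with `λ(0) ≥ 0` the trajectory `(q(t), λ(t))`
converges to `(q*, λ*)`. -/
theorem synchronous_convergence (d : ℕ) (hd : 1 ≤ d)
    (M : Matrix (Fin d) (Fin d) ℝ) (hpd : M.PosDef)
    (hM : ∀ h k : Fin d, M h k ≤ M h h ∧ 0 ≤ M h k)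
    (D : ℝ) (hD : IsGreatest (Set.range fun h => M h h) D)
    (θ UN b : ℝ) (hθ : Real.sin θ ≠ 0) (hUN : 0 < UN)
    (c r : Fin d → ℝ)
    (γ : ℝ) (hγ : 0 < γ) (hγ2 : γ < UN ^ 2 / (Real.sin θ ^ 2 * d * D))
    (q l : ℕ → Fin d → ℝ)
    (hl0 : ∀ h : Fin d, 0 ≤ l 0 h)
    (hlrec : ∀ t, l (t + 1) =
      fun h => max (l t h + γ * (b - (c h + 2 * Real.sin θ / UN ^ 2 * (M *ᵥ q t) h))) 0)
    (hqrec : ∀ t, q (t + 1) = Real.sin θ • l (t + 1) - r)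
    (qs ls : Fin d → ℝ)
    (hfixl : ls = fun h => max (ls h + γ * (b - (c h + 2 * Real.sin θ / UN ^ 2 * (M *ᵥ qs) h))) 0)
    (hfixq : qs = Real.sin θ • ls - r) :
    Filter.Tendsto (fun t => (q t, l t)) Filter.atTop (nhds (qs, ls)) := by
  -- basic positivity facts
  have hsin2 : 0 < Real.sin θ ^ 2 := lt_of_le_of_ne (sq_nonneg _) (Ne.symm (pow_ne_zero 2 hθ))
  have hdpos : (0:ℝ) < d := by exact_mod_cast hd
  have hdiag : ∀ h : Fin d, 0 < M h h := by
    intro h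
    have hx : (Pi.single h 1 : Fin d → ℝ) ≠ 0 := by
      intro hc
      have := congrFun hc h
      simp at this
    have := hpd.dotProduct_mulVec_pos hx
    simpa [Matrix.mulVec_single, single_dotProduct] using this
  have hD0 : 0 < D := by
    obtain ⟨h0, hh0⟩ := hD.1
    exact hh0 ▸ hdiag h0
  have hMub : ∀ h k : Fin d, 0 ≤ M h k ∧ M h k ≤ D := fun h k =>
    ⟨(hM h k).2, le_trans (hM h k).1 (hD.2 (Set.mem_range_self h))⟩
  -- the contraction matrix
  set a : ℝ := γ * (2 * Real.sin θ ^ 2 / UN ^ 2) with ha_def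
  have ha : 0 < a := by positivity
  set A : Matrix (Fin d) (Fin d) ℝ := a • M with hA_def
  set β : ℝ := a * (d * D) with hβ_def
  have hquadA : ∀ x : Fin d → ℝ, x ⬝ᵥ (A *ᵥ x) = a * (x ⬝ᵥ (M *ᵥ x)) := by
    intro x
    rw [hA_def, Matrix.smul_mulVec, dotProduct_smul, smul_eq_mul]
  have hupA : ∀ x : Fin d → ℝ, x ⬝ᵥ (A *ᵥ x) ≤ β * (x ⬝ᵥ x) := by
    intro x
    calc x ⬝ᵥ (A *ᵥ x) = a * (x ⬝ᵥ (M *ᵥ x)) := hquadA x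
      _ ≤ a * ((d * D) * (x ⬝ᵥ x)) :=
          mul_le_mul_of_nonneg_left (quad_upper M D hD0.le hMub x) ha.le
      _ = β * (x ⬝ᵥ x) := by rw [hβ_def]; ring
  have hApsd : A.PosSemidef := by
    refine Matrix.PosSemidef.of_dotProduct_mulVec_nonneg ?_ ?_
    · show Aᴴ = A
      rw [hA_def, Matrix.conjTranspose_smul, hpd.1.eq]
      norm_num
    · intro x
      rw [hA_def, Matrix.smul_mulVec, dotProduct_smul, smul_eq_mul]
      exact mul_nonneg ha.le (hpd.posSemidef.dotProduct_mulVec_nonneg x)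
  obtain ⟨m, hm, hlow⟩ := quad_lower hd M hpd
  have hlowA : ∀ x : Fin d → ℝ, (a * m) * (x ⬝ᵥ x) ≤ x ⬝ᵥ (A *ᵥ x) := by
    intro x
    rw [hquadA, mul_assoc]
    exact mul_le_mul_of_nonneg_left (hlow x) ha.le
  -- β < 2
  have hden : 0 < Real.sin θ ^ 2 * d * D := by positivity
  have hkey : γ * (Real.sin θ ^ 2 * d * D) < UN ^ 2 := (lt_div_iff₀ hden).mp hγ2
  have hβ2 : β < 2 := by
    have hU2 : (0:ℝ) < UN ^ 2 := by positivity
    have : β = 2 * (γ * (Real.sin θ ^ 2 * d * D)) / UN ^ 2 := by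
      rw [hβ_def, ha_def]; field_simp
    rw [this, div_lt_iff₀ hU2]
    nlinarith [hkey]
  -- the contraction constant
  set K : ℝ := max (1 - (2 - β) * (a * m)) 0 with hK_def
  have hK0 : 0 ≤ K := le_max_right _ _
  have hK1 : K < 1 := by
    apply max_lt _ one_pos
    nlinarith [mul_pos (by linarith : (0:ℝ) < 2 - β) (mul_pos ha hm)]
  have hdotnn : ∀ x : Fin d → ℝ, 0 ≤ x ⬝ᵥ x := fun x =>
    Finset.sum_nonneg fun i _ => mul_self_nonneg (x i)
  -- key contraction estimate
  have hcontr : ∀ x : Fin d → ℝ, (x - A *ᵥ x) ⬝ᵥ (x - A *ᵥ x) ≤ K * (x ⬝ᵥ x) := by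
    intro x
    have hexp : (x - A *ᵥ x) ⬝ᵥ (x - A *ᵥ x) =
        x ⬝ᵥ x - 2 * (x ⬝ᵥ (A *ᵥ x)) + (A *ᵥ x) ⬝ᵥ (A *ᵥ x) := by
      rw [sub_dotProduct, dotProduct_sub, dotProduct_sub,
        dotProduct_comm (A *ᵥ x) x]
      ring
    have h1 : (A *ᵥ x) ⬝ᵥ (A *ᵥ x) ≤ β * (x ⬝ᵥ (A *ᵥ x)) := quad_sq_le hApsd hupA x
    have h2 : (a * m) * (x ⬝ᵥ x) ≤ x ⬝ᵥ (A *ᵥ x) := hlowA x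
    have hp0 : 0 ≤ x ⬝ᵥ x := hdotnn x
    have h3 : (2 - β) * ((a * m) * (x ⬝ᵥ x)) ≤ (2 - β) * (x ⬝ᵥ (A *ᵥ x)) :=
      mul_le_mul_of_nonneg_left h2 (by linarith)
    have h4 : (1 - (2 - β) * (a * m)) * (x ⬝ᵥ x) ≤ K * (x ⬝ᵥ x) :=
      mul_le_mul_of_nonneg_right (le_max_left _ _) hp0
    rw [hexp]
    nlinarith [h1, h3, h4]
  -- the error sequence
  set E : ℕ → ℝ := fun t => (l t - ls) ⬝ᵥ (l t - ls) with hE_def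
  have hE0 : ∀ t, 0 ≤ E t := fun t => hdotnn _
  -- one-step contraction for t ≥ 1
  have step : ∀ s : ℕ, E (s + 2) ≤ K * E (s + 1) := by
    intro s
    set t := s + 1 with ht_def
    set e : Fin d → ℝ := l t - ls with he_def
    have hq_t : q t = Real.sin θ • l t - r := hqrec s
    have hqdiff : q t - qs = Real.sin θ • e := by
      rw [hq_t, hfixq, he_def, smul_sub]
      abel
    have hMdiff : ∀ h, (M *ᵥ q t) h - (M *ᵥ qs) h = Real.sin θ * (M *ᵥ e) h := by
      intro h
      have h1 := congrFun (Matrix.mulVec_sub M (q t) qs) h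
      rw [hqdiff, Matrix.mulVec_smul] at h1
      simpa using h1.symm
    have hcoord : ∀ h, (l (t + 1) h - ls h) * (l (t + 1) h - ls h) ≤
        ((e - A *ᵥ e) h) * ((e - A *ᵥ e) h) := by
      intro h
      have hlh : l (t + 1) h
          = max (l t h + γ * (b - (c h + 2 * Real.sin θ / UN ^ 2 * (M *ᵥ q t) h))) 0 := by
        rw [hlrec t]
      have hsh : ls h
          = max (ls h + γ * (b - (c h + 2 * Real.sin θ / UN ^ 2 * (M *ᵥ qs) h))) 0 := by
        conv_lhs => rw [hfixl]
      have hdiff : (l t h + γ * (b - (c h + 2 * Real.sin θ / UN ^ 2 * (M *ᵥ q t) h)))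
          - (ls h + γ * (b - (c h + 2 * Real.sin θ / UN ^ 2 * (M *ᵥ qs) h)))
          = (e - A *ᵥ e) h := by
        have hAe : (A *ᵥ e) h = a * (M *ᵥ e) h := by
          rw [hA_def, Matrix.smul_mulVec]; simp
        have hsub : (e - A *ᵥ e) h = (l t h - ls h) - a * (M *ᵥ e) h := by
          rw [Pi.sub_apply, hAe]; simp [he_def]
        rw [hsub, ha_def]
        have hMd := hMdiff h
        linear_combination (-(γ * (2 * Real.sin θ / UN ^ 2))) * hMd
      have habs : |l (t + 1) h - ls h| ≤ |(e - A *ᵥ e) h| := by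
        calc |l (t + 1) h - ls h|
            = |max (l t h + γ * (b - (c h + 2 * Real.sin θ / UN ^ 2 * (M *ᵥ q t) h))) 0
              - max (ls h + γ * (b - (c h + 2 * Real.sin θ / UN ^ 2 * (M *ᵥ qs) h))) 0| := by
              rw [← hlh, ← hsh]
          _ ≤ |(l t h + γ * (b - (c h + 2 * Real.sin θ / UN ^ 2 * (M *ᵥ q t) h)))
              - (ls h + γ * (b - (c h + 2 * Real.sin θ / UN ^ 2 * (M *ᵥ qs) h)))| :=
              abs_max_sub_max_le_abs _ _ _
          _ = |(e - A *ᵥ e) h| := by rw [hdiff]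
      calc (l (t + 1) h - ls h) * (l (t + 1) h - ls h)
          = |l (t + 1) h - ls h| * |l (t + 1) h - ls h| := (abs_mul_abs_self _).symm
        _ ≤ |(e - A *ᵥ e) h| * |(e - A *ᵥ e) h| :=
            mul_le_mul habs habs (abs_nonneg _) (abs_nonneg _)
        _ = ((e - A *ᵥ e) h) * ((e - A *ᵥ e) h) := abs_mul_abs_self _
    calc E (s + 2) = ∑ h, (l (t + 1) h - ls h) * (l (t + 1) h - ls h) := by
          simp [hE_def, dotProduct, ht_def]
      _ ≤ ∑ h, ((e - A *ᵥ e) h) * ((e - A *ᵥ e) h) := Finset.sum_le_sum fun h _ => hcoord h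
      _ = (e - A *ᵥ e) ⬝ᵥ (e - A *ᵥ e) := rfl
      _ ≤ K * (e ⬝ᵥ e) := hcontr e
      _ = K * E (s + 1) := by rw [hE_def, he_def, ht_def]
  -- geometric decay
  have hgeom : ∀ s : ℕ, E (s + 1) ≤ K ^ s * E 1 := by
    intro s
    induction s with
    | zero => simp
    | succ n ih =>
      calc E (n + 2) ≤ K * E (n + 1) := step n
        _ ≤ K * (K ^ n * E 1) := mul_le_mul_of_nonneg_left ih hK0
        _ = K ^ (n + 1) * E 1 := by ring
  have hgeo0 : Tendsto (fun s : ℕ => K ^ s * E 1) atTop (nhds 0) := by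
    simpa using (tendsto_pow_atTop_nhds_zero_of_lt_one hK0 hK1).mul_const (E 1)
  have hE1 : Tendsto (fun s : ℕ => E (s + 1)) atTop (nhds 0) :=
    squeeze_zero (fun s => hE0 _) hgeom hgeo0
  have hEt : Tendsto E atTop (nhds 0) := (tendsto_add_atTop_iff_nat 1).mp hE1
  -- coordinatewise convergence of l
  have hco : ∀ h : Fin d, Tendsto (fun t => l t h) atTop (nhds (ls h)) := by
    intro h
    have hsq : Tendsto (fun t => (l t h - ls h) ^ 2) atTop (nhds 0) := by
      apply squeeze_zero (fun t => sq_nonneg _) _ hEt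
      intro t
      have : (l t h - ls h) ^ 2 = ((l t - ls) h) * ((l t - ls) h) := by
        simp [sq]
      rw [this]
      exact Finset.single_le_sum (fun k _ => mul_self_nonneg ((l t - ls) k))
        (Finset.mem_univ h)
    have habs : Tendsto (fun t => |l t h - ls h|) atTop (nhds 0) := by
      have h1 : Tendsto (fun t => Real.sqrt ((l t h - ls h) ^ 2)) atTop
          (nhds (Real.sqrt 0)) := (Real.continuous_sqrt.tendsto 0).comp hsq
      simpa [Real.sqrt_sq_eq_abs, Real.sqrt_zero] using h1
    have hdiff0 : Tendsto (fun t => l t h - ls h) atTop (nhds 0) := by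
      rw [tendsto_zero_iff_norm_tendsto_zero]
      simpa [Real.norm_eq_abs] using habs
    have := hdiff0.add_const (ls h)
    simpa using this
  have hl : Tendsto l atTop (nhds ls) := tendsto_pi_nhds.mpr hco
  -- convergence of q
  have hq : Tendsto q atTop (nhds qs) := by
    have h2 : Tendsto (fun t => Real.sin θ • l t - r) atTop (nhds (Real.sin θ • ls - r)) :=
      (hl.const_smul (Real.sin θ)).sub tendsto_const_nhds
    rw [hfixq]
    apply h2.congr'
    filter_upwards [Filter.eventually_ge_atTop 1] with t ht
    obtain ⟨s, rfl⟩ := Nat.exists_eq_add_of_le ht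
    rw [add_comm]
    exact (hqrec s).symm
  exact hq.prodMk_nhds hl
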